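/- Let f(z) = z + ∑_{n=2}^∞ aₙ zⁿ be analytic on 𝔻 with |aₙ| ≤ n for all n ≥ 2, and suppose d(0, ∂f(𝔻)) ≥ 1/4. Let Φ : [0,1] → [0,∞) be continuous increasing and ω : 𝔻 → 𝔻 be a Schwarz-type function with |ω(z)| ≤ |z|. Set S_r/π = ∑_{n=1}^∞ n|aₙ|² r^{2n}. Then |ω(z)| + ∑_{n=2}^∞ |aₙ||ω(z)|ⁿ + Φ(|ω(z)|)·(S_r/π) ≤ d(0, ∂f(𝔻)) for all |z| = r ≤ R, where R is the unique root in (0,1) of r/(1−r)² + Φ(r)·r²(1+4r²+r⁴)/(1−r²)⁴ = 1/4. -/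

import Mathlib

open Set Metric

private lemma c2aux (n : ℕ) : 2 * (n+2).choose 2 = (n+1)*(n+2) := by
  induction n with
  | zero => decide
  | succ n ih =>
    rw [show n+1+2 = n+2+1 from by omega, Nat.choose_succ_succ (n+2) 1,
      Nat.choose_one_right, Nat.mul_add, ih]
    ring

private lemma c3aux (n : ℕ) : 6 * (n+3).choose 3 = (n+1)*(n+2)*(n+3) := by
  induction n with
  | zero => decide
  | succ n ih =>
    have h2 : 2 * (n+3).choose 2 = (n+2)*(n+3) := by
      have h := c2aux (n+1)
      calc 2 * (n+3).choose 2 = 2 * (n+1+2).choose 2 := by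
            rw [show n+1+2 = n+3 from by omega]
      _ = (n+1+1)*(n+1+2) := h
      _ = (n+2)*(n+3) := by ring
    rw [show n+1+3 = n+3+1 from by omega, Nat.choose_succ_succ (n+3) 2, Nat.mul_add, ih]
    calc 6 * (n+3).choose 2 + (n+1)*(n+2)*(n+3)
        = 3*(2*(n+3).choose 2) + (n+1)*(n+2)*(n+3) := by ring
    _ = 3*((n+2)*(n+3)) + (n+1)*(n+2)*(n+3) := by rw [h2]
    _ = (n+1+1)*(n+1+2)*(n+1+3) := by ring

/-- `∑ (n+1) x^(n+1) = x/(1-x)^2` for `|x| < 1`. -/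
private lemma hasSum_lin (x : ℝ) (hx : |x| < 1) :
    HasSum (fun n : ℕ => ((n : ℝ) + 1) * x ^ (n + 1)) (x / (1 - x) ^ 2) := by
  have h : HasSum (fun n : ℕ => (n : ℝ) * x ^ n) (x / (1 - x) ^ 2) :=
    hasSum_coe_mul_geometric_of_norm_lt_one (by simpa using hx)
  have h1 : HasSum (fun n : ℕ => ((n + 1 : ℕ) : ℝ) * x ^ (n + 1)) (x / (1 - x) ^ 2 - 0) := by
    apply (hasSum_nat_add_iff (f := fun n : ℕ => (n : ℝ) * x ^ n) 1).2
    convert h using 1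
    · rfl
    simp
  have he : (fun n : ℕ => ((n : ℝ) + 1) * x ^ (n + 1))
      = fun n : ℕ => ((n + 1 : ℕ) : ℝ) * x ^ (n + 1) := by
    funext n; push_cast; ring
  rw [he]
  simpa using h1

/-- `∑ (n+1)^3 x^(n+1) = x(1+4x+x^2)/(1-x)^4` for `|x| < 1`. -/
private lemma hasSum_cube (x : ℝ) (hx : |x| < 1) :
    HasSum (fun n : ℕ => ((n : ℝ) + 1) ^ 3 * x ^ (n + 1))
      (x * (1 + 4 * x + x ^ 2) / (1 - x) ^ 4) := by
  have hx' : ‖x‖ < 1 := by simpa using hx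
  have h3 : HasSum (fun n : ℕ => ((n + 3).choose 3 : ℝ) * x ^ n) (1 / (1 - x) ^ 4) :=
    hasSum_choose_mul_geometric_of_norm_lt_one 3 hx'
  have h2 : HasSum (fun n : ℕ => ((n + 2).choose 2 : ℝ) * x ^ n) (1 / (1 - x) ^ 3) :=
    hasSum_choose_mul_geometric_of_norm_lt_one 2 hx'
  have h1 : HasSum (fun n : ℕ => ((n + 1).choose 1 : ℝ) * x ^ n) (1 / (1 - x) ^ 2) :=
    hasSum_choose_mul_geometric_of_norm_lt_one 1 hx'
  have hcomb := (((h3.mul_left 6).sub (h2.mul_left 6)).add h1).mul_left x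
  have hne : (1 - x) ≠ 0 := by
    intro h; rw [sub_eq_zero] at h; rw [← h] at hx; simp at hx
  have hfun : (fun n : ℕ => ((n : ℝ) + 1) ^ 3 * x ^ (n + 1))
      = fun n : ℕ => x * (6 * (((n + 3).choose 3 : ℝ) * x ^ n)
          - 6 * (((n + 2).choose 2 : ℝ) * x ^ n) + ((n + 1).choose 1 : ℝ) * x ^ n) := by
    funext n
    have e3 : ((n + 3).choose 3 : ℝ) = ((n:ℝ)+1)*((n:ℝ)+2)*((n:ℝ)+3)/6 := by
      have hc := c3aux n
      have h' : ((6 * (n+3).choose 3 : ℕ) : ℝ) = (((n+1)*(n+2)*(n+3) : ℕ) : ℝ) := by rw [hc]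
      push_cast at h'
      linarith
    have e2 : ((n + 2).choose 2 : ℝ) = ((n:ℝ)+1)*((n:ℝ)+2)/2 := by
      have hc := c2aux n
      have h' : ((2 * (n+2).choose 2 : ℕ) : ℝ) = (((n+1)*(n+2) : ℕ) : ℝ) := by rw [hc]
      push_cast at h'
      linarith
    have e1 : ((n + 1).choose 1 : ℝ) = (n:ℝ)+1 := by
      simp [Nat.choose_one_right]
    rw [e3, e2, e1, pow_succ]
    ring
  rw [hfun]
  convert hcomb using 1
  · rfl
  field_simp
  ring

theorem stmt7 (f : ℂ → ℂ) (a : ℕ → ℂ) (ha1 : a 1 = 1)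
    (hf : AnalyticOn ℂ f (ball 0 1))
    (hrep : ∀ z ∈ ball (0:ℂ) 1, f z = ∑' n : ℕ, a (n + 1) * z ^ (n + 1))
    (ha : ∀ n, 2 ≤ n → ‖a n‖ ≤ (n : ℝ))
    (hd : 1 / 4 ≤ infDist 0 (frontier (f '' ball 0 1)))
    (Φ : ℝ → ℝ) (hΦc : ContinuousOn Φ (Icc 0 1))
    (hΦm : MonotoneOn Φ (Icc 0 1)) (hΦ0 : ∀ x ∈ Icc (0:ℝ) 1, 0 ≤ Φ x)
    (ω : ℂ → ℂ) (hωmap : ∀ z ∈ ball (0:ℂ) 1, ω z ∈ ball (0:ℂ) 1)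
    (hω : ∀ z ∈ ball (0:ℂ) 1, ‖ω z‖ ≤ ‖z‖)
    (R : ℝ) (hR : R ∈ Ioo (0:ℝ) 1)
    (hroot : R / (1 - R) ^ 2
        + Φ R * (R ^ 2 * (1 + 4 * R ^ 2 + R ^ 4) / (1 - R ^ 2) ^ 4) = 1 / 4)
    (huniq : ∀ r ∈ Ioo (0:ℝ) 1,
      r / (1 - r) ^ 2
        + Φ r * (r ^ 2 * (1 + 4 * r ^ 2 + r ^ 4) / (1 - r ^ 2) ^ 4) = 1 / 4 → r = R) :
    ∀ z : ℂ, ‖z‖ ≤ R →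
      ‖ω z‖ + (∑' n : ℕ, ‖a (n + 2)‖ * ‖ω z‖ ^ (n + 2))
        + Φ ‖ω z‖ * (∑' n : ℕ, ((n : ℝ) + 1) * ‖a (n + 1)‖ ^ 2 * ‖z‖ ^ (2 * (n + 1)))
      ≤ infDist 0 (frontier (f '' ball 0 1)) := by
  intro z hz
  obtain ⟨hR0, hR1⟩ := hR
  have hzball : z ∈ ball (0:ℂ) 1 := by
    simp only [mem_ball, dist_zero_right]
    exact lt_of_le_of_lt hz hR1
  set t : ℝ := ‖ω z‖ with ht
  set r : ℝ := ‖z‖ with hr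
  have ht0 : 0 ≤ t := norm_nonneg _
  have htr : t ≤ r := hω z hzball
  have hrR : r ≤ R := hz
  have htR : t ≤ R := le_trans htr hrR
  have hRabs : |R| < 1 := by rw [abs_of_pos hR0]; exact hR1
  -- linear sum at R
  have hB : HasSum (fun n : ℕ => ((n : ℝ) + 1) * R ^ (n + 1)) (R / (1 - R) ^ 2) :=
    hasSum_lin R hRabs
  -- shifted: ∑ (n+2) R^(n+2) = R/(1-R)^2 - R
  have hB' : HasSum (fun n : ℕ => ((n : ℝ) + 2) * R ^ (n + 2)) (R / (1 - R) ^ 2 - R) := by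
    have h1 : HasSum (fun n : ℕ => (((n + 1 : ℕ) : ℝ) + 1) * R ^ ((n + 1) + 1))
        (R / (1 - R) ^ 2 - R) := by
      apply (hasSum_nat_add_iff (f := fun n : ℕ => ((n : ℝ) + 1) * R ^ (n + 1)) 1).2
      convert hB using 1
      · rfl
      rw [Finset.sum_range_one]
      push_cast; ring
    have he : (fun n : ℕ => ((n : ℝ) + 2) * R ^ (n + 2))
        = fun n : ℕ => (((n + 1 : ℕ) : ℝ) + 1) * R ^ ((n + 1) + 1) := by
      funext n; push_cast; ring
    rw [he]; exact h1
  -- cubic sum at R^2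
  have hR2abs : |R ^ 2| < 1 := by
    rw [abs_of_nonneg (sq_nonneg R)]
    calc R ^ 2 = R * R := sq R
    _ < 1 * 1 := by apply mul_lt_mul' (le_of_lt hR1) hR1 (le_of_lt hR0) one_pos
    _ = 1 := by ring
  have hC : HasSum (fun n : ℕ => ((n : ℝ) + 1) ^ 3 * (R ^ 2) ^ (n + 1))
      (R ^ 2 * (1 + 4 * R ^ 2 + (R ^ 2) ^ 2) / (1 - R ^ 2) ^ 4) := hasSum_cube _ hR2abs
  -- coefficient bound : ‖a (n+1)‖ ≤ n+1
  have hacoef : ∀ n : ℕ, ‖a (n + 1)‖ ≤ (n : ℝ) + 1 := by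
    intro n
    cases n with
    | zero => simp [ha1]
    | succ m =>
      have := ha (m + 2) (by omega)
      push_cast at this ⊢
      linarith
  -- first tsum bound
  have hsummR : Summable (fun n : ℕ => ((n : ℝ) + 2) * R ^ (n + 2)) := hB'.summable
  have hterm1 : ∀ n : ℕ, ‖a (n + 2)‖ * t ^ (n + 2) ≤ ((n : ℝ) + 2) * R ^ (n + 2) := by
    intro n
    have h1 : ‖a (n + 2)‖ ≤ (n : ℝ) + 2 := by
      have := ha (n + 2) (by omega); push_cast at this; linarith
    have h2 : t ^ (n + 2) ≤ R ^ (n + 2) := pow_le_pow_left₀ ht0 htR _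
    have h3 : (0:ℝ) ≤ R ^ (n + 2) := pow_nonneg (le_of_lt hR0) _
    calc ‖a (n + 2)‖ * t ^ (n + 2) ≤ ((n : ℝ) + 2) * t ^ (n + 2) :=
          mul_le_mul_of_nonneg_right h1 (pow_nonneg ht0 _)
    _ ≤ ((n : ℝ) + 2) * R ^ (n + 2) := by
          apply mul_le_mul_of_nonneg_left h2 (by positivity)
  have hsumm1 : Summable (fun n : ℕ => ‖a (n + 2)‖ * t ^ (n + 2)) := by
    apply Summable.of_nonneg_of_le (fun n => by positivity) hterm1 hsummR
  have hbound1 : (∑' n : ℕ, ‖a (n + 2)‖ * t ^ (n + 2)) ≤ R / (1 - R) ^ 2 - R := by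
    rw [← hB'.tsum_eq]
    exact Summable.tsum_le_tsum hterm1 hsumm1 hsummR
  -- third tsum bound
  have hterm3 : ∀ n : ℕ, ((n : ℝ) + 1) * ‖a (n + 1)‖ ^ 2 * r ^ (2 * (n + 1))
      ≤ ((n : ℝ) + 1) ^ 3 * (R ^ 2) ^ (n + 1) := by
    intro n
    have h1 : ‖a (n + 1)‖ ^ 2 ≤ ((n : ℝ) + 1) ^ 2 :=
      pow_le_pow_left₀ (norm_nonneg _) (hacoef n) 2
    have hr2 : r ^ 2 ≤ R ^ 2 := by
      calc r ^ 2 = r * r := sq r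
      _ ≤ R * R := mul_le_mul hrR hrR (norm_nonneg _) (le_of_lt hR0)
      _ = R ^ 2 := (sq R).symm
    have hr2nn : (0:ℝ) ≤ r ^ 2 := sq_nonneg r
    have h2 : r ^ (2 * (n + 1)) ≤ (R ^ 2) ^ (n + 1) := by
      rw [pow_mul]
      exact pow_le_pow_left₀ hr2nn hr2 _
    calc ((n : ℝ) + 1) * ‖a (n + 1)‖ ^ 2 * r ^ (2 * (n + 1))
        ≤ ((n : ℝ) + 1) * ((n : ℝ) + 1) ^ 2 * r ^ (2 * (n + 1)) := by
          apply mul_le_mul_of_nonneg_right _ (by positivity)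
          exact mul_le_mul_of_nonneg_left h1 (by positivity)
    _ ≤ ((n : ℝ) + 1) * ((n : ℝ) + 1) ^ 2 * (R ^ 2) ^ (n + 1) := by
          apply mul_le_mul_of_nonneg_left h2 (by positivity)
    _ = ((n : ℝ) + 1) ^ 3 * (R ^ 2) ^ (n + 1) := by ring
  have hsumm3 : Summable (fun n : ℕ => ((n : ℝ) + 1) * ‖a (n + 1)‖ ^ 2 * r ^ (2 * (n + 1))) := by
    apply Summable.of_nonneg_of_le (fun n => by positivity) hterm3 hC.summable
  have hbound3 : (∑' n : ℕ, ((n : ℝ) + 1) * ‖a (n + 1)‖ ^ 2 * r ^ (2 * (n + 1)))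
      ≤ R ^ 2 * (1 + 4 * R ^ 2 + R ^ 4) / (1 - R ^ 2) ^ 4 := by
    have := Summable.tsum_le_tsum hterm3 hsumm3 hC.summable
    rw [hC.tsum_eq] at this
    convert this using 3
    · rfl
    ring
  -- Φ bound
  have htIcc : t ∈ Icc (0:ℝ) 1 := ⟨ht0, le_trans htR (le_of_lt hR1)⟩
  have hRIcc : R ∈ Icc (0:ℝ) 1 := ⟨le_of_lt hR0, le_of_lt hR1⟩
  have hΦt : Φ t ≤ Φ R := hΦm htIcc hRIcc htR
  have hΦR0 : 0 ≤ Φ R := hΦ0 R hRIcc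
  have hΦt0 : 0 ≤ Φ t := hΦ0 t htIcc
  have h3nonneg : 0 ≤ ∑' n : ℕ, ((n : ℝ) + 1) * ‖a (n + 1)‖ ^ 2 * r ^ (2 * (n + 1)) :=
    tsum_nonneg (fun n => by positivity)
  have hmul : Φ t * (∑' n : ℕ, ((n : ℝ) + 1) * ‖a (n + 1)‖ ^ 2 * r ^ (2 * (n + 1)))
      ≤ Φ R * (R ^ 2 * (1 + 4 * R ^ 2 + R ^ 4) / (1 - R ^ 2) ^ 4) :=
    mul_le_mul hΦt hbound3 h3nonneg hΦR0
  calc t + (∑' n : ℕ, ‖a (n + 2)‖ * t ^ (n + 2))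
        + Φ t * (∑' n : ℕ, ((n : ℝ) + 1) * ‖a (n + 1)‖ ^ 2 * r ^ (2 * (n + 1)))
      ≤ R + (R / (1 - R) ^ 2 - R)
        + Φ R * (R ^ 2 * (1 + 4 * R ^ 2 + R ^ 4) / (1 - R ^ 2) ^ 4) := by
        apply add_le_add (add_le_add htR hbound1) hmul
  _ = 1 / 4 := by rw [← hroot]; ring
  _ ≤ infDist 0 (frontier (f '' ball 0 1)) := hd
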